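/- Suppose (λ, u) satisfies the fixed point equation u = λL_λ⁻¹N(u) in Z (with α, β, k > 0, λ > 0, λk ≠ 1), where ‖L_λ⁻¹‖_{Z→Y} ≤ λ/|λ²k²−1| and ‖N(u)‖_Z ≤ 1. Then ‖u‖_Y ≤ λ²/|λ²k²−1|, and combined with the energy identity λ|∫₀^{2π}sin(s+u(s))ds|/(2π) ≤ (βk²+α)(1/2π)∫₀^{2π}u'(s)²ds and Wirtinger's inequality, one gets |(1/2π)∫₀^{2π}sin(s+u(s))ds| ≤ (βk²+α)λ³/(λ²k²−1)². In particular (1/2π)∫₀^{2π}sin(s+u(s))ds → 0 as λ → +∞ along solutions. -/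

import Mathlib

open Real MeasureTheory intervalIntegral
open scoped ENNReal

section helpers

lemma periodic_deriv'' (f : ℝ → ℝ) (hp : Function.Periodic f (2*π)) :
    Function.Periodic (deriv f) (2*π) := by
  intro x
  have : (fun y => f (y + 2*π)) = f := funext fun y => hp y
  rw [← deriv_comp_add_const f (2*π) x, this]

lemma amgm_aux (t w : ℝ) (ht : 0 < t) : |w| ≤ (t*w^2 + 1/t)/2 := by
  rw [le_div_iff₀ (by norm_num : (0:ℝ) < 2), ← sub_nonneg]
  have expand : t*w^2 + 1/t - (|w|) * 2 = (t^2*w^2 + 1 - 2*t*(|w|))/t := by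
    field_simp
  rw [expand]
  apply div_nonneg _ ht.le
  nlinarith [sq_nonneg (t*(|w|) - 1), sq_abs w]

lemma per_integral_zero (f f' : ℝ → ℝ) (hd : ∀ x, HasDerivAt f (f' x) x)
    (hc : Continuous f') (hpf : f (2*π) = f 0) :
    ∫ x in (0:ℝ)..(2*π), f' x = 0 := by
  rw [intervalIntegral.integral_eq_sub_of_hasDerivAt (fun x _ => hd x)
    (hc.intervalIntegrable _ _), hpf, sub_self]


lemma periodic_deriv' (f : ℝ → ℝ) (hp : Function.Periodic f (2*π)) :
    Function.Periodic (deriv f) (2*π) := by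
  intro x
  have : (fun y => f (y + 2*π)) = f := funext fun y => hp y
  rw [← deriv_comp_add_const f (2*π) x, this]

lemma wirtinger_aux (v : ℝ → ℝ) (hv : ContDiff ℝ 1 v)
    (hp : Function.Periodic v (2*π))
    (hm : ∫ x in (0:ℝ)..(2*π), v x = 0) :
    ∫ x in (0:ℝ)..(2*π), (v x) ^ 2 ≤ ∫ x in (0:ℝ)..(2*π), (deriv v x) ^ 2 := by
  haveI hT : Fact (0 < 2*π) := ⟨Real.two_pi_pos⟩
  set g : ℝ → ℂ := fun x => Complex.ofReal (v x) with hg_def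
  set g' : ℝ → ℂ := fun x => Complex.ofReal (deriv v x) with hg'_def
  have hvc : Continuous v := hv.continuous
  have hv'c : Continuous (deriv v) := hv.continuous_deriv le_rfl
  have hgc : Continuous g := Complex.continuous_ofReal.comp hvc
  have hg'c : Continuous g' := Complex.continuous_ofReal.comp hv'c
  have hgd : ∀ x, HasDerivAt g (g' x) x := fun x =>
    ((hv.differentiable one_ne_zero x).hasDerivAt).ofReal_comp
  have hpg : Function.Periodic g (2*π) := fun x => by simp [hg_def, hp x]
  have hpg' : Function.Periodic g' (2*π) := fun x => by
    simp [hg'_def, periodic_deriv' v hp x]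
  have hFc : Continuous (hpg.lift) := hgc.quotient_liftOn' _
  have hF'c : Continuous (hpg'.lift) := hg'c.quotient_liftOn' _
  set F : C(AddCircle (2*π), ℂ) := ⟨hpg.lift, hFc⟩ with hF_def
  set F' : C(AddCircle (2*π), ℂ) := ⟨hpg'.lift, hF'c⟩ with hF'_def
  -- Parseval
  have hPar : ∀ (H : C(AddCircle (2*π), ℂ)),
      ∑' i : ℤ, ‖fourierCoeff (⇑H) i‖ ^ 2 = ∫ t, ‖H t‖ ^ 2 ∂AddCircle.haarAddCircle := by
    intro H
    calc ∑' i : ℤ, ‖fourierCoeff (⇑H) i‖^2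
        = ∑' i : ℤ, ‖fourierCoeff (⇑(ContinuousMap.toLp (E := ℂ) 2 AddCircle.haarAddCircle ℂ H)) i‖^2 := by
          simp_rw [fourierCoeff_toLp]
      _ = ∫ t, ‖(ContinuousMap.toLp (E := ℂ) 2 AddCircle.haarAddCircle ℂ H) t‖^2 ∂AddCircle.haarAddCircle :=
          tsum_sq_fourierCoeff _
      _ = ∫ t, ‖H t‖^2 ∂AddCircle.haarAddCircle := by
          apply MeasureTheory.integral_congr_ae
          filter_upwards [ContinuousMap.coeFn_toLp (E := ℂ) (p := 2) (μ := AddCircle.haarAddCircle) (𝕜 := ℂ) H] with t ht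
          rw [ht]
  -- summability
  have hSum : ∀ (H : C(AddCircle (2*π), ℂ)), Summable (fun i : ℤ => ‖fourierCoeff (⇑H) i‖ ^ 2) := by
    intro H
    have h2 := (lp.memℓp (fourierBasis.repr
      (ContinuousMap.toLp (E := ℂ) 2 AddCircle.haarAddCircle ℂ H))).summable (by norm_num)
    have h3 : ∀ i : ℤ, ‖fourierBasis.repr
        (ContinuousMap.toLp (E := ℂ) 2 AddCircle.haarAddCircle ℂ H) i‖ ^ ((2:ℝ≥0∞).toReal)
        = ‖fourierCoeff (⇑H) i‖ ^ 2 := by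
      intro i
      rw [fourierBasis_repr, fourierCoeff_toLp,
        show ((2:ℝ≥0∞)).toReal = ((2:ℕ):ℝ) by norm_num, Real.rpow_natCast]
    exact (summable_congr h3).mp h2
  -- haar integral versus interval integral
  have hab : (0:ℝ) < 0 + 2*π := lt_add_of_pos_right 0 hT.out
  have hIF : ∫ t, ‖F t‖^2 ∂AddCircle.haarAddCircle = (1/(2*π)) * ∫ x in (0:ℝ)..2*π, (v x)^2 := by
    have h4 := AddCircle.intervalIntegral_preimage (T := 2*π) 0 (fun t => ‖F t‖^2)
    rw [AddCircle.volume_eq_smul_haarAddCircle, MeasureTheory.integral_smul_measure,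
      ENNReal.toReal_ofReal Real.two_pi_pos.le, zero_add, smul_eq_mul] at h4
    rw [show (∫ x in (0:ℝ)..2*π, ‖F (x : AddCircle (2*π))‖^2) = ∫ x in (0:ℝ)..2*π, (v x)^2 from by
      apply intervalIntegral.integral_congr
      intro x _
      show ‖hpg.lift ↑x‖^2 = _
      rw [Function.Periodic.lift_coe]
      simp [hg_def, sq_abs]] at h4
    rw [h4]
    field_simp
  have hIF' : ∫ t, ‖F' t‖^2 ∂AddCircle.haarAddCircle
      = (1/(2*π)) * ∫ x in (0:ℝ)..2*π, (deriv v x)^2 := by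
    have h4 := AddCircle.intervalIntegral_preimage (T := 2*π) 0 (fun t => ‖F' t‖^2)
    rw [AddCircle.volume_eq_smul_haarAddCircle, MeasureTheory.integral_smul_measure,
      ENNReal.toReal_ofReal Real.two_pi_pos.le, zero_add, smul_eq_mul] at h4
    rw [show (∫ x in (0:ℝ)..2*π, ‖F' (x : AddCircle (2*π))‖^2)
        = ∫ x in (0:ℝ)..2*π, (deriv v x)^2 from by
      apply intervalIntegral.integral_congr
      intro x _
      show ‖hpg'.lift ↑x‖^2 = _
      rw [Function.Periodic.lift_coe]
      simp [hg'_def, sq_abs]] at h4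
    rw [h4]
    field_simp
  -- coefficients as fourierCoeffOn
  have hcoeF : ∀ n : ℤ, fourierCoeff (⇑F) n = fourierCoeffOn hab g n := by
    intro n
    rw [fourierCoeff_eq_intervalIntegral (⇑F) n 0, fourierCoeffOn_eq_integral]
    congr 1
    · norm_num
    · apply intervalIntegral.integral_congr
      intro x _
      show fourier (-n) (x : AddCircle (2*π)) • F ↑x
          = fourier (-n) (x : AddCircle (0+2*π-0)) • g x
      rw [show F (x : AddCircle (2*π)) = g x from Function.Periodic.lift_coe hpg x]
      congr 1
      rw [fourier_coe_apply, fourier_coe_apply]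
      norm_num
  have hcoeF' : ∀ n : ℤ, fourierCoeff (⇑F') n = fourierCoeffOn hab g' n := by
    intro n
    rw [fourierCoeff_eq_intervalIntegral (⇑F') n 0, fourierCoeffOn_eq_integral]
    congr 1
    · norm_num
    · apply intervalIntegral.integral_congr
      intro x _
      show fourier (-n) (x : AddCircle (2*π)) • F' ↑x
          = fourier (-n) (x : AddCircle (0+2*π-0)) • g' x
      rw [show F' (x : AddCircle (2*π)) = g' x from Function.Periodic.lift_coe hpg' x]
      congr 1
      rw [fourier_coe_apply, fourier_coe_apply]
      norm_num
  -- mean zero coefficient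
  have hc0 : fourierCoeffOn hab g 0 = 0 := by
    rw [fourierCoeffOn_eq_integral]
    simp only [neg_zero, fourier_zero, one_smul, hg_def]
    rw [intervalIntegral.integral_ofReal]
    rw [show (0:ℝ) + 2*π = 2*π by ring, hm]
    simp
  -- derivative relation
  have hrel : ∀ n : ℤ, n ≠ 0 →
      fourierCoeffOn hab g' n = (Complex.I * n) * fourierCoeffOn hab g n := by
    intro n hn
    have h := fourierCoeffOn_of_hasDerivAt hab hn (fun x _ => hgd x)
      (hg'c.intervalIntegrable _ _)
    have hper0 : g (0 + 2*π) = g 0 := hpg 0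
    rw [hper0, sub_self, mul_zero, zero_sub] at h
    have hn' : (n:ℂ) ≠ 0 := Int.cast_ne_zero.mpr hn
    have hπ : (π:ℂ) ≠ 0 := Complex.ofReal_ne_zero.mpr Real.pi_ne_zero
    rw [h]
    field_simp
    push_cast
    ring
  -- termwise comparison
  have hterm : ∀ i : ℤ, ‖fourierCoeff (⇑F) i‖^2 ≤ ‖fourierCoeff (⇑F') i‖^2 := by
    intro i
    rcases eq_or_ne i 0 with rfl | hi
    · rw [hcoeF, hc0]
      simp
    · rw [hcoeF, hcoeF', hrel i hi, norm_mul]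
      have h1 : (1:ℝ) ≤ ‖(Complex.I * (i:ℂ) : ℂ)‖ := by
        rw [norm_mul, Complex.norm_I, one_mul]
        have : ((1:ℤ):ℝ) ≤ ‖((i:ℤ):ℂ)‖ := by
          rw [Complex.norm_intCast]
          exact_mod_cast Int.one_le_abs hi
        simpa using this
      have hc := norm_nonneg (fourierCoeffOn hab g i)
      exact pow_le_pow_left₀ hc (le_mul_of_one_le_left hc h1) 2
  -- assemble
  have hmain := Summable.tsum_le_tsum hterm (hSum F) (hSum F')
  rw [hPar F, hPar F', hIF, hIF'] at hmain
  have h2pi : (0:ℝ) < 1/(2*π) := by positivity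
  exact le_of_mul_le_mul_left hmain h2pi

end helpers

set_option maxHeartbeats 1000000 in
/-- Bounds along the solution branch: a `C³` `2π`-periodic mean-zero solution of
the rescaled fluxon equation satisfies `‖u‖_Y ≤ λ²/|λ²k²−1|` and
`|(1/2π)∫₀^{2π} sin(s+u(s)) ds| ≤ (βk²+α)λ³/(λ²k²−1)²`; in particular the mean
of `sin(s+u(s))` tends to `0` as `λ → +∞` along solutions. -/
theorem solution_branch_bounds
    (α β k lam : ℝ) (hα : 0 < α) (hβ : 0 < β) (hk : 0 < k) (hlam : 0 < lam)
    (hne : lam^2 * k^2 ≠ 1)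
    (u : ℝ → ℝ) (hu : ContDiff ℝ 3 u)
    (hper : ∀ z, u (z + 2*π) = u z)
    (hmean : ∫ s in (0:ℝ)..(2*π), u s = 0)
    (hODE : ∀ z, β * k^2 * iteratedDeriv 3 u z
        + (lam * k^2 - lam⁻¹) * iteratedDeriv 2 u z
        - α * deriv u z - lam * Real.sin (z + u z)
        + (lam / (2*π)) * ∫ s in (0:ℝ)..(2*π), Real.sin (s + u s) = 0) :
    Real.sqrt ((1 / (2*π)) * ∫ s in (0:ℝ)..(2*π), (deriv u s)^2)
        ≤ lam^2 / |lam^2 * k^2 - 1|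
    ∧ |(1 / (2*π)) * ∫ s in (0:ℝ)..(2*π), Real.sin (s + u s)|
        ≤ (β * k^2 + α) * lam^3 / (lam^2 * k^2 - 1)^2 := by
  have h2π : (0:ℝ) < 2*π := Real.two_pi_pos
  -- derivatives
  set u1 := deriv u with hu1_def
  set u2 := iteratedDeriv 2 u with hu2_def
  set u3 := iteratedDeriv 3 u with hu3_def
  have h21cast : ContDiff ℝ ((2:ℕ∞)+1) u := by
    exact hu
  have hu1C2 : ContDiff ℝ 2 u1 := by
    rw [hu1_def]
    exact (contDiff_succ_iff_deriv.mp h21cast).2.2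
  have h2eq : u2 = deriv u1 := by
    rw [hu2_def, hu1_def, show (2:ℕ) = 1+1 from rfl, iteratedDeriv_succ, iteratedDeriv_one]
  have h11cast : ContDiff ℝ ((1:ℕ∞)+1) u1 := by
    exact hu1C2
  have hu2C1 : ContDiff ℝ 1 u2 := by
    rw [h2eq]
    exact (contDiff_succ_iff_deriv.mp h11cast).2.2
  have h3eq : u3 = deriv u2 := by
    rw [hu3_def, h2eq, hu1_def, show (3:ℕ) = 2+1 from rfl, iteratedDeriv_succ,
      show (2:ℕ) = 1+1 from rfl, iteratedDeriv_succ, iteratedDeriv_one]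
  have hd1 : ∀ x, HasDerivAt u (u1 x) x := fun x =>
    ((hu.differentiable (by norm_num)) x).hasDerivAt
  have hd2 : ∀ x, HasDerivAt u1 (u2 x) x := fun x => by
    rw [h2eq]
    exact ((hu1C2.differentiable (by norm_num)) x).hasDerivAt
  have hd3 : ∀ x, HasDerivAt u2 (u3 x) x := fun x => by
    rw [h3eq]
    exact ((hu2C1.differentiable one_ne_zero) x).hasDerivAt
  have hc0 : Continuous u := hu.continuous
  have hc1 : Continuous u1 := hu1C2.continuous
  have hc2 : Continuous u2 := hu2C1.continuous
  have hc3 : Continuous u3 := by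
    rw [h3eq]; exact hu2C1.continuous_deriv le_rfl
  -- periodicity
  have hP : Function.Periodic u (2*π) := hper
  have hP1 : Function.Periodic u1 (2*π) := by
    rw [hu1_def]; exact periodic_deriv'' u hP
  have hP2 : Function.Periodic u2 (2*π) := by
    rw [h2eq]; exact periodic_deriv'' u1 hP1
  have hPe : u (2*π) = u 0 := by simpa using hP 0
  have hP1e : u1 (2*π) = u1 0 := by simpa using hP1 0
  have hP2e : u2 (2*π) = u2 0 := by simpa using hP2 0
  -- continuity of sin term
  have hsin_c : Continuous (fun z => Real.sin (z + u z)) :=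
    Real.continuous_sin.comp (continuous_id.add hc0)
  -- basic integral identities
  have hIu1 : ∫ x in (0:ℝ)..(2*π), u1 x = 0 := per_integral_zero u u1 hd1 hc1 hPe
  have hIu2 : ∫ x in (0:ℝ)..(2*π), u2 x = 0 := per_integral_zero u1 u2 hd2 hc2 hP1e
  have hIu1u2 : ∫ x in (0:ℝ)..(2*π), u1 x * u2 x = 0 := by
    apply per_integral_zero (fun x => u1 x^2/2) _ _ (hc1.mul hc2)
    · rw [hP1e]
    · intro x
      have h := ((hd2 x).pow 2).div_const 2
      exact h.congr_deriv (by norm_num; ring)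
  have hIu2u3 : ∫ x in (0:ℝ)..(2*π), u2 x * u3 x = 0 := by
    apply per_integral_zero (fun x => u2 x^2/2) _ _ (hc2.mul hc3)
    · rw [hP2e]
    · intro x
      have h := ((hd3 x).pow 2).div_const 2
      exact h.congr_deriv (by norm_num; ring)
  have hIu1u3 : ∫ x in (0:ℝ)..(2*π), u1 x * u3 x
      = - ∫ x in (0:ℝ)..(2*π), u2 x ^ 2 := by
    have h := intervalIntegral.integral_mul_deriv_eq_deriv_mul
      (a := (0:ℝ)) (b := 2*π) (u := u1) (v := u2) (u' := u2) (v' := u3)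
      (fun x _ => hd2 x) (fun x _ => hd3 x)
      (hc2.intervalIntegrable _ _) (hc3.intervalIntegrable _ _)
    rw [hP1e, hP2e] at h
    rw [h]
    rw [show (∫ x in (0:ℝ)..(2*π), u2 x * u2 x) = ∫ x in (0:ℝ)..(2*π), u2 x ^ 2 from by
      apply intervalIntegral.integral_congr
      intro x _
      ring]
    ring
  have hIsin1 : (∫ z in (0:ℝ)..(2*π), Real.sin (z + u z) * u1 z)
      = - ∫ z in (0:ℝ)..(2*π), Real.sin (z + u z) := by
    have h0 : ∫ z in (0:ℝ)..(2*π), Real.sin (z + u z) * (1 + u1 z) = 0 := by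
      apply per_integral_zero (fun z => -Real.cos (z + u z)) _ _
        (hsin_c.mul (continuous_const.add hc1))
      · simp only [hPe]
        rw [add_comm (2*π) (u 0), Real.cos_add_two_pi, zero_add]
      · intro x
        have h := (((hasDerivAt_id x).add (hd1 x)).cos).neg
        exact h.congr_deriv (by simp)
    have hsplit : ∫ z in (0:ℝ)..(2*π), Real.sin (z + u z) * (1 + u1 z)
        = (∫ z in (0:ℝ)..(2*π), Real.sin (z + u z))
          + ∫ z in (0:ℝ)..(2*π), Real.sin (z + u z) * u1 z := by
      rw [← intervalIntegral.integral_add (f := fun z => Real.sin (z + u z))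
        (g := fun z => Real.sin (z + u z) * u1 z) (hsin_c.intervalIntegrable _ _)
        ((hsin_c.mul hc1).intervalIntegrable _ _)]
      apply intervalIntegral.integral_congr
      intro x _
      ring
    rw [hsplit] at h0
    linarith only [h0]
  -- abbreviations
  set S := ∫ s in (0:ℝ)..(2*π), Real.sin (s + u s) with hS_def
  set A := ∫ x in (0:ℝ)..(2*π), u2 x ^ 2 with hA_def
  set B := ∫ s in (0:ℝ)..(2*π), u1 s ^ 2 with hB_def
  set c := lam * k^2 - lam⁻¹ with hc_def
  set M := lam^2 * k^2 - 1 with hM_def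
  have hM0 : M ≠ 0 := sub_ne_zero.mpr hne
  have hc_eq : c = M / lam := by
    rw [hc_def, hM_def]
    field_simp
  have hcne : c ≠ 0 := by
    rw [hc_eq]
    exact div_ne_zero hM0 hlam.ne'
  have hcpos : 0 < |c| := abs_pos.mpr hcne
  have hA0 : 0 ≤ A := intervalIntegral.integral_nonneg h2π.le (fun x _ => sq_nonneg _)
  have hB0 : 0 ≤ B := intervalIntegral.integral_nonneg h2π.le (fun x _ => sq_nonneg _)
  -- integrabilities
  have Ia : IntervalIntegrable (fun z => (β*k^2) * (u2 z * u3 z)) volume 0 (2*π) :=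
    (continuous_const.mul (hc2.mul hc3)).intervalIntegrable _ _
  have Ib : IntervalIntegrable (fun z => c * (u2 z)^2) volume 0 (2*π) :=
    (continuous_const.mul (hc2.pow 2)).intervalIntegrable _ _
  have Ic : IntervalIntegrable (fun z => α * (u1 z * u2 z)) volume 0 (2*π) :=
    (continuous_const.mul (hc1.mul hc2)).intervalIntegrable _ _
  have Id : IntervalIntegrable (fun z => lam * (Real.sin (z + u z) * u2 z)) volume 0 (2*π) :=
    (continuous_const.mul (hsin_c.mul hc2)).intervalIntegrable _ _
  have Ie : IntervalIntegrable (fun z => (lam/(2*π)*S) * u2 z) volume 0 (2*π) :=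
    (continuous_const.mul hc2).intervalIntegrable _ _
  have Ja : IntervalIntegrable (fun z => (β*k^2) * (u1 z * u3 z)) volume 0 (2*π) :=
    (continuous_const.mul (hc1.mul hc3)).intervalIntegrable _ _
  have Jb : IntervalIntegrable (fun z => c * (u1 z * u2 z)) volume 0 (2*π) :=
    (continuous_const.mul (hc1.mul hc2)).intervalIntegrable _ _
  have Jc : IntervalIntegrable (fun z => α * (u1 z)^2) volume 0 (2*π) :=
    (continuous_const.mul (hc1.pow 2)).intervalIntegrable _ _
  have Jd : IntervalIntegrable (fun z => lam * (Real.sin (z + u z) * u1 z)) volume 0 (2*π) :=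
    (continuous_const.mul (hsin_c.mul hc1)).intervalIntegrable _ _
  have Je : IntervalIntegrable (fun z => (lam/(2*π)*S) * u1 z) volume 0 (2*π) :=
    (continuous_const.mul hc1).intervalIntegrable _ _
  -- energy identity E1 (multiply by u2)
  have hE1 : c * A = lam * ∫ z in (0:ℝ)..(2*π), Real.sin (z + u z) * u2 z := by
    have e1 : ∀ z, (β*k^2) * (u2 z * u3 z) + c * (u2 z)^2 - α * (u1 z * u2 z)
        - lam * (Real.sin (z + u z) * u2 z) + (lam/(2*π)*S) * u2 z = 0 := fun z => by
      linear_combination u2 z * hODE z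
    have hzero : ∫ z in (0:ℝ)..(2*π), ((β*k^2) * (u2 z * u3 z) + c * (u2 z)^2
        - α * (u1 z * u2 z) - lam * (Real.sin (z + u z) * u2 z) + (lam/(2*π)*S) * u2 z) = 0 :=
      (intervalIntegral.integral_congr (g := fun _ => (0:ℝ)) (fun z _ => e1 z)).trans
        intervalIntegral.integral_zero
    rw [intervalIntegral.integral_add (((Ia.add Ib).sub Ic).sub Id) Ie,
      intervalIntegral.integral_sub ((Ia.add Ib).sub Ic) Id,
      intervalIntegral.integral_sub (Ia.add Ib) Ic,
      intervalIntegral.integral_add Ia Ib,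
      intervalIntegral.integral_const_mul, intervalIntegral.integral_const_mul,
      intervalIntegral.integral_const_mul, intervalIntegral.integral_const_mul,
      intervalIntegral.integral_const_mul, hIu2u3, hIu1u2, hIu2] at hzero
    linear_combination hzero
  -- energy identity E2 (multiply by u1)
  have hE2 : lam * S = β*k^2 * A + α * B := by
    have e2 : ∀ z, (β*k^2) * (u1 z * u3 z) + c * (u1 z * u2 z) - α * (u1 z)^2
        - lam * (Real.sin (z + u z) * u1 z) + (lam/(2*π)*S) * u1 z = 0 := fun z => by
      linear_combination u1 z * hODE z
    have hzero : ∫ z in (0:ℝ)..(2*π), ((β*k^2) * (u1 z * u3 z) + c * (u1 z * u2 z)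
        - α * (u1 z)^2 - lam * (Real.sin (z + u z) * u1 z) + (lam/(2*π)*S) * u1 z) = 0 :=
      (intervalIntegral.integral_congr (g := fun _ => (0:ℝ)) (fun z _ => e2 z)).trans
        intervalIntegral.integral_zero
    rw [intervalIntegral.integral_add (((Ja.add Jb).sub Jc).sub Jd) Je,
      intervalIntegral.integral_sub ((Ja.add Jb).sub Jc) Jd,
      intervalIntegral.integral_sub (Ja.add Jb) Jc,
      intervalIntegral.integral_add Ja Jb,
      intervalIntegral.integral_const_mul, intervalIntegral.integral_const_mul,
      intervalIntegral.integral_const_mul, intervalIntegral.integral_const_mul,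
      intervalIntegral.integral_const_mul, hIu1u3, hIu1u2, hIsin1, hIu1] at hzero
    rw [← hB_def] at hzero
    linear_combination hzero
  -- bound on A
  set t := |c| / lam with ht_def
  have ht : 0 < t := div_pos hcpos hlam
  have ht' : t * (1/t) = 1 := mul_one_div_cancel ht.ne'
  have hptw : ∀ x ∈ Set.Icc (0:ℝ) (2*π),
      |Real.sin (x + u x) * u2 x| ≤ (t * (u2 x)^2 + 1/t)/2 := by
    intro x _
    have h1 : |Real.sin (x + u x) * u2 x| ≤ |u2 x| := by
      rw [abs_mul]
      exact mul_le_of_le_one_left (abs_nonneg _) (Real.abs_sin_le_one _)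
    have h2 : |u2 x| ≤ (t * (u2 x)^2 + 1/t)/2 := by
      rw [le_div_iff₀ (by norm_num : (0:ℝ) < 2), ← sub_nonneg]
      have expand : t*(u2 x)^2 + 1/t - (|u2 x|) * 2
          = (t^2*(u2 x)^2 + 1 - 2*t*(|u2 x|))/t := by
        field_simp
      rw [expand]
      apply div_nonneg _ ht.le
      nlinarith [sq_nonneg (t*|u2 x| - 1), sq_abs (u2 x)]
    linarith
  have hIbound : (∫ z in (0:ℝ)..(2*π), (t * (u2 z)^2 + 1/t)/2)
      = (t * A + 2*π*(1/t))/2 := by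
    rw [intervalIntegral.integral_div,
      intervalIntegral.integral_add (f := fun z => t * (u2 z)^2) (g := fun _ => 1/t)
        ((continuous_const.mul (hc2.pow 2)).intervalIntegrable _ _)
        intervalIntegrable_const,
      intervalIntegral.integral_const_mul, intervalIntegral.integral_const, ← hA_def]
    rw [smul_eq_mul]
    ring_nf
  have hsinabs : |∫ z in (0:ℝ)..(2*π), Real.sin (z + u z) * u2 z|
      ≤ (t * A + 2*π*(1/t))/2 := by
    calc |∫ z in (0:ℝ)..(2*π), Real.sin (z + u z) * u2 z|
        ≤ ∫ z in (0:ℝ)..(2*π), |Real.sin (z + u z) * u2 z| :=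
          intervalIntegral.abs_integral_le_integral_abs h2π.le
      _ ≤ ∫ z in (0:ℝ)..(2*π), (t * (u2 z)^2 + 1/t)/2 :=
          intervalIntegral.integral_mono_on h2π.le
            ((hsin_c.mul hc2).abs.intervalIntegrable _ _)
            ((((continuous_const.mul (hc2.pow 2)).add continuous_const).div_const 2).intervalIntegrable _ _)
            hptw
      _ = (t * A + 2*π*(1/t))/2 := hIbound
  have habs2 : |c| * |c| = c^2 := by rw [abs_mul_abs_self, ← pow_two]
  have hcA : |c| * A ≤ |c| * A / 2 + π * lam^2 / |c| := by
    have h1 : |c| * A = lam * |∫ z in (0:ℝ)..(2*π), Real.sin (z + u z) * u2 z| := by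
      calc |c| * A = |c * A| := by rw [abs_mul, abs_of_nonneg hA0]
        _ = |lam * ∫ z in (0:ℝ)..(2*π), Real.sin (z + u z) * u2 z| := by rw [hE1]
        _ = lam * |∫ z in (0:ℝ)..(2*π), Real.sin (z + u z) * u2 z| := by
            rw [abs_mul, abs_of_pos hlam]
    calc |c| * A = lam * |∫ z in (0:ℝ)..(2*π), Real.sin (z + u z) * u2 z| := h1
      _ ≤ lam * ((t * A + 2*π*(1/t))/2) := mul_le_mul_of_nonneg_left hsinabs hlam.le
      _ = |c| * A / 2 + π * lam^2 / |c| := by rw [ht_def]; field_simp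
  have hA2 : A * c^2 ≤ 2*π*lam^2 := by
    have h6 : |c| * (|c| * A) ≤ |c| * (2*(π*lam^2/|c|)) :=
      mul_le_mul_of_nonneg_left (by linarith only [hcA]) hcpos.le
    have h8 : |c| * (2*(π*lam^2/|c|)) = 2*π*lam^2 := by field_simp
    have h7 : A * c^2 = |c| * (|c| * A) := by rw [← habs2]; ring
    rw [h7]
    exact h6.trans_eq h8
  have hM2 : 0 < M^2 := by rw [← sq_abs]; exact pow_pos (abs_pos.mpr hM0) 2
  have hAbound : A ≤ 2*π*lam^4/M^2 := by
    have hc2eq : c^2 = M^2/lam^2 := by rw [hc_eq, div_pow]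
    rw [le_div_iff₀ hM2]
    have hMe : M^2 = c^2 * lam^2 := by rw [hc2eq]; field_simp
    rw [hMe]
    calc A * (c^2 * lam^2) = (A * c^2) * lam^2 := by ring
      _ ≤ (2*π*lam^2) * lam^2 := mul_le_mul_of_nonneg_right hA2 (sq_nonneg lam)
      _ = 2*π*lam^4 := by ring
  -- Wirtinger
  have hBA : B ≤ A := by
    have h := wirtinger_aux u1 (hu1C2.of_le (by norm_num)) hP1 hIu1
    rw [← h2eq] at h
    exact h
  constructor
  · -- first bound
    have h1 : (1/(2*π)) * B ≤ (lam^2/|M|)^2 := by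
      have hsq : (lam^2/|M|)^2 = lam^4/M^2 := by
        rw [div_pow, sq_abs]
        ring
      rw [hsq]
      have h2 : B ≤ 2*π*lam^4/M^2 := hBA.trans hAbound
      calc (1/(2*π)) * B ≤ (1/(2*π)) * (2*π*lam^4/M^2) :=
            mul_le_mul_of_nonneg_left h2 (by positivity)
        _ = lam^4/M^2 := by field_simp
    calc Real.sqrt ((1/(2*π)) * B) ≤ Real.sqrt ((lam^2/|M|)^2) := Real.sqrt_le_sqrt h1
      _ = lam^2/|M| := Real.sqrt_sq (by positivity)
  · -- second bound
    have hS0 : 0 ≤ S := by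
      have hRHS : 0 ≤ β*k^2*A + α*B :=
        add_nonneg (mul_nonneg (by positivity) hA0) (mul_nonneg hα.le hB0)
      rw [← hE2] at hRHS
      exact nonneg_of_mul_nonneg_right hRHS hlam
    rw [abs_of_nonneg (mul_nonneg (by positivity) hS0)]
    have p1 : 0 ≤ α * (A - B) := mul_nonneg hα.le (sub_nonneg.mpr hBA)
    have p2 : 0 ≤ (β*k^2+α) * (2*π*lam^4/M^2 - A) :=
      mul_nonneg (by positivity) (sub_nonneg.mpr hAbound)
    have h3 : lam * S ≤ (β*k^2+α) * (2*π*lam^4/M^2) := by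
      rw [hE2]
      refine le_trans (by linarith only [p1]) (mul_le_mul_of_nonneg_left hAbound (by positivity))
    have h4 : S ≤ (β*k^2+α) * (2*π*lam^3/M^2) := by
      have e : (β*k^2+α) * (2*π*lam^4/M^2) = lam * ((β*k^2+α) * (2*π*lam^3/M^2)) := by
        field_simp
      rw [e] at h3
      exact le_of_mul_le_mul_left h3 hlam
    calc (1/(2*π)) * S ≤ (1/(2*π)) * ((β*k^2+α) * (2*π*lam^3/M^2)) :=
          mul_le_mul_of_nonneg_left h4 (by positivity)
      _ = (β*k^2+α) * lam^3/M^2 := by field_simp
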